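/- If G' is the set of Pauli products commuting with a fixed nonidentity Pauli product P(α), then averaging conjugation over a transversal of G' projects any Hermitian matrix H onto the span of I and P(α); that is, (1/|G'|) Σ_{g ∈ G'} g H g† = a I + b P(α) for some real a, b. -/

import Mathlib

open Matrix Complex

noncomputable def pauli : Fin 4 → Matrix (Fin 2) (Fin 2) ℂ
  | 0 => 1
  | 1 => !![0, 1; 1, 0]
  | 2 => !![0, -I; I, 0]
  | 3 => !![1, 0; 0, -1]

/-- Tensor product of Pauli matrices indexed by `a : Fin n → Fin 4`. -/
noncomputable def PauliProd {n : ℕ} (a : Fin n → Fin 4) :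
    Matrix (Fin n → Fin 2) (Fin n → Fin 2) ℂ :=
  Matrix.of fun i j => ∏ k, pauli (a k) (i k) (j k)

/-- Weight: the number of non-identity tensor factors. -/
noncomputable def wt {n : ℕ} (a : Fin n → Fin 4) : ℕ :=
  (Finset.univ.filter fun i => a i ≠ 0).card

open scoped Classical

def epsB (a b : Fin 4) : Bool := a ≠ 0 && b ≠ 0 && a ≠ b

noncomputable def sg (a b : Fin 4) : ℂ := if epsB a b then -1 else 1

def add4 (a b : Fin 4) : Fin 4 := ⟨(a.val ^^^ b.val) % 4, Nat.mod_lt _ (by norm_num)⟩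

lemma add4_eq_zero_iff (a b : Fin 4) : add4 a b = 0 ↔ a = b := by revert a b; decide

lemma epsB_add4 (c a b : Fin 4) : epsB c (add4 a b) = xor (epsB c a) (epsB c b) := by
  revert c a b; decide

lemma sg_mul (c a b : Fin 4) : sg c a * sg c b = sg c (add4 a b) := by
  unfold sg
  rw [epsB_add4]
  cases h1 : epsB c a <;> cases h2 : epsB c b <;> norm_num

lemma sg_zero (a : Fin 4) : sg a 0 = 1 := by
  have : epsB a 0 = false := by revert a; decide
  simp [sg, this]

lemma sg_cases (a b : Fin 4) : sg a b = 1 ∨ sg a b = -1 := by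
  unfold sg; cases epsB a b <;> simp

lemma sum_sg (b : Fin 4) : ∑ a : Fin 4, sg a b = if b = 0 then 4 else 0 := by
  fin_cases b <;> simp only [Fin.sum_univ_four, sg] <;> simp +decide <;> norm_num

lemma pauli_sq (a : Fin 4) : pauli a * pauli a = 1 := by
  fin_cases a <;>
    · ext i j
      fin_cases i <;> fin_cases j <;>
        simp [pauli, Matrix.mul_apply, Fin.sum_univ_two, Matrix.one_apply]

lemma pauli_swap (a b : Fin 4) : pauli a * pauli b = sg a b • (pauli b * pauli a) := by
  fin_cases a <;> fin_cases b <;>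
    · ext i j
      fin_cases i <;> fin_cases j <;>
        · simp [pauli, sg, epsB, Matrix.mul_apply, Fin.sum_univ_two]
          try ring_nf
          try simp [Complex.I_sq]

lemma tmul {n : ℕ} (A B : Fin n → Matrix (Fin 2) (Fin 2) ℂ) :
    (Matrix.of fun i j : Fin n → Fin 2 => ∏ k, A k (i k) (j k)) *
      (Matrix.of fun i j : Fin n → Fin 2 => ∏ k, B k (i k) (j k)) =
    Matrix.of fun i j : Fin n → Fin 2 => ∏ k, (A k * B k) (i k) (j k) := by
  ext i j
  simp only [Matrix.mul_apply, Matrix.of_apply]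
  rw [Finset.prod_univ_sum, ← Fintype.piFinset_univ]
  exact Finset.sum_congr rfl fun m _ => (Finset.prod_mul_distrib).symm

lemma PauliProd_mul {n : ℕ} (a b : Fin n → Fin 4) :
    PauliProd a * PauliProd b =
      Matrix.of fun i j : Fin n → Fin 2 => ∏ k, (pauli (a k) * pauli (b k)) (i k) (j k) :=
  tmul _ _

lemma prod_one_entry {n : ℕ} (i j : Fin n → Fin 2) :
    ∏ k, (1 : Matrix (Fin 2) (Fin 2) ℂ) (i k) (j k)
      = (1 : Matrix (Fin n → Fin 2) (Fin n → Fin 2) ℂ) i j := by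
  simp only [Matrix.one_apply]
  by_cases h : i = j
  · subst h; simp
  · rw [if_neg h]
    obtain ⟨k, hk⟩ := Function.ne_iff.mp h
    exact Finset.prod_eq_zero (Finset.mem_univ k) (by simp [hk])

lemma PauliProd_sq {n : ℕ} (a : Fin n → Fin 4) : PauliProd a * PauliProd a = 1 := by
  rw [PauliProd_mul]
  ext i j
  simp only [Matrix.of_apply]
  rw [Finset.prod_congr rfl fun k _ => by rw [pauli_sq]]
  exact prod_one_entry i j

lemma PauliProd_zero {n : ℕ} : PauliProd (fun _ : Fin n => (0 : Fin 4)) = 1 := by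
  ext i j
  show ∏ k, pauli 0 (i k) (j k) = _
  rw [show pauli 0 = 1 from rfl]
  exact prod_one_entry i j

lemma PauliProd_swap {n : ℕ} (c b : Fin n → Fin 4) :
    PauliProd c * PauliProd b = (∏ k, sg (c k) (b k)) • (PauliProd b * PauliProd c) := by
  rw [PauliProd_mul, PauliProd_mul]
  ext i j
  simp only [Matrix.smul_apply, Matrix.of_apply, smul_eq_mul]
  rw [Finset.prod_congr rfl fun k _ => by rw [pauli_swap (c k) (b k)], ← Finset.prod_mul_distrib]
  exact Finset.prod_congr rfl fun k _ => by simp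

lemma PauliProd_conj {n : ℕ} (c b : Fin n → Fin 4) :
    PauliProd c * PauliProd b * PauliProd c = (∏ k, sg (c k) (b k)) • PauliProd b := by
  rw [PauliProd_swap, smul_mul_assoc, mul_assoc, PauliProd_sq, mul_one]

lemma PauliProd_inv {n : ℕ} (a : Fin n → Fin 4) : (PauliProd a)⁻¹ = PauliProd a :=
  Matrix.inv_eq_right_inv (PauliProd_sq a)

lemma PauliProd_mul_ne_zero {n : ℕ} (a b : Fin n → Fin 4) :
    PauliProd a * PauliProd b ≠ 0 := by
  intro h
  have h2 : (PauliProd a * PauliProd b) * (PauliProd b * PauliProd a) = 1 := by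
    rw [mul_assoc, ← mul_assoc (PauliProd b), PauliProd_sq, one_mul, PauliProd_sq]
  rw [h, zero_mul] at h2
  exact zero_ne_one h2

lemma comm_iff {n : ℕ} (c α : Fin n → Fin 4) :
    PauliProd c * PauliProd α = PauliProd α * PauliProd c ↔
      (∏ k, sg (c k) (α k)) = 1 := by
  constructor
  · intro h
    have hs := PauliProd_swap c α
    rw [h] at hs
    have : (1 - ∏ k, sg (c k) (α k)) • (PauliProd α * PauliProd c) = 0 := by
      rw [sub_smul, one_smul, ← hs, sub_self]
    rcases smul_eq_zero.mp this with h1 | h2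
    · linear_combination -h1
    · exact absurd h2 (PauliProd_mul_ne_zero α c)
  · intro h
    rw [PauliProd_swap c α, h, one_smul]

lemma prod_sg_cases {n : ℕ} (c b : Fin n → Fin 4) :
    (∏ k, sg (c k) (b k)) = 1 ∨ (∏ k, sg (c k) (b k)) = -1 :=
  Finset.prod_induction _ (fun x => x = 1 ∨ x = -1)
    (by rintro x y (rfl | rfl) (rfl | rfl) <;> norm_num)
    (Or.inl rfl) (fun k _ => sg_cases _ _)

lemma sum_Sg {n : ℕ} (β : Fin n → Fin 4) :
    ∑ g : Fin n → Fin 4, ∏ k, sg (g k) (β k)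
      = if β = (fun _ => 0) then (4:ℂ) ^ n else 0 := by
  rw [← Fintype.piFinset_univ,
    ← Finset.prod_univ_sum (fun _ : Fin n => (Finset.univ : Finset (Fin 4)))
      (fun k a => sg a (β k))]
  by_cases h : β = fun _ => 0
  · subst h
    simp [sum_sg]
  · rw [if_neg h]
    obtain ⟨k, hk⟩ := Function.ne_iff.mp h
    refine Finset.prod_eq_zero (Finset.mem_univ k) ?_
    simp [sum_sg, hk]

open scoped Classical

/-- Averaging conjugation over the Pauli products commuting with a fixed
nonidentity Pauli product P(α) projects a Hermitian matrix (expanded with real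
coefficients in the Pauli basis) onto the span of I and P(α). -/
theorem group_average_projection {n : ℕ} (α : Fin n → Fin 4)
    (hα : α ≠ fun _ => 0) (hco : (Fin n → Fin 4) → ℝ)
    (H : Matrix (Fin n → Fin 2) (Fin n → Fin 2) ℂ)
    (hH : H = ∑ β : Fin n → Fin 4, (hco β : ℂ) • PauliProd β) :
    ((((Finset.univ.filter fun c : Fin n → Fin 4 =>
          PauliProd c * PauliProd α = PauliProd α * PauliProd c).card : ℂ))⁻¹) •
        ∑ g ∈ Finset.univ.filter fun c : Fin n → Fin 4 =>
            PauliProd c * PauliProd α = PauliProd α * PauliProd c,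
          PauliProd g * H * (PauliProd g)⁻¹
      = (hco (fun _ => 0) : ℂ) • (1 : Matrix (Fin n → Fin 2) (Fin n → Fin 2) ℂ)
        + (hco α : ℂ) • PauliProd α := by
  subst hH
  set Gs := Finset.univ.filter fun c : Fin n → Fin 4 =>
      PauliProd c * PauliProd α = PauliProd α * PauliProd c with hGs
  set z : Fin n → Fin 4 := fun _ => 0 with hz
  have hαz : α ≠ z := hα
  -- doubled character sum over Gs
  have hT2 : ∀ β : Fin n → Fin 4, (2:ℂ) * ∑ g ∈ Gs, ∏ k, sg (g k) (β k)
      = (if β = z then (4:ℂ)^n else 0) + (if β = α then (4:ℂ)^n else 0) := by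
    intro β
    have hsplit := Finset.sum_filter_add_sum_filter_not Finset.univ
      (fun c => PauliProd c * PauliProd α = PauliProd α * PauliProd c)
      (fun g => (1 + ∏ k, sg (g k) (α k)) * ∏ k, sg (g k) (β k))
    have h1 : ∑ g ∈ Gs, (1 + ∏ k, sg (g k) (α k)) * ∏ k, sg (g k) (β k)
        = (2:ℂ) * ∑ g ∈ Gs, ∏ k, sg (g k) (β k) := by
      rw [Finset.mul_sum]
      refine Finset.sum_congr rfl fun g hg => ?_
      have h := (comm_iff g α).mp (Finset.mem_filter.mp hg).2
      rw [h]; ring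
    have h2 : ∑ g ∈ Finset.univ.filter
          (fun c => ¬(PauliProd c * PauliProd α = PauliProd α * PauliProd c)),
        (1 + ∏ k, sg (g k) (α k)) * ∏ k, sg (g k) (β k) = 0 := by
      refine Finset.sum_eq_zero fun g hg => ?_
      have hnc := (Finset.mem_filter.mp hg).2
      rcases prod_sg_cases g α with h | h
      · exact absurd ((comm_iff g α).mpr h) hnc
      · rw [h]; ring
    have hcond : ((fun k => add4 (α k) (β k)) = z) ↔ β = α := by
      constructor
      · intro h
        funext k
        exact ((add4_eq_zero_iff _ _).mp (congrFun h k)).symm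
      · intro h; subst h; funext k; exact (add4_eq_zero_iff _ _).mpr rfl
    have h3 : ∑ g : Fin n → Fin 4, (1 + ∏ k, sg (g k) (α k)) * ∏ k, sg (g k) (β k)
        = (if β = z then (4:ℂ)^n else 0) + (if β = α then (4:ℂ)^n else 0) := by
      have he : ∀ g : Fin n → Fin 4, (1 + ∏ k, sg (g k) (α k)) * ∏ k, sg (g k) (β k)
          = (∏ k, sg (g k) (β k)) + ∏ k, sg (g k) (add4 (α k) (β k)) := by
        intro g
        rw [add_mul, one_mul, ← Finset.prod_mul_distrib]
        congr 1
        exact Finset.prod_congr rfl fun k _ => sg_mul _ _ _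
      rw [Finset.sum_congr rfl fun g _ => he g, Finset.sum_add_distrib, sum_Sg β,
        sum_Sg (fun k => add4 (α k) (β k))]
      exact congrArg₂ _ rfl (if_congr hcond rfl rfl)
    rw [← h1]
    rw [← hsplit, h2, add_zero] at h3
    exact h3
  -- the cardinality
  have hcardT : ∑ g ∈ Gs, ∏ k, sg (g k) (z k) = (Gs.card : ℂ) := by
    rw [Finset.sum_congr rfl fun g _ => ?_]
    · rw [Finset.sum_const, nsmul_eq_mul, mul_one]
    · exact Finset.prod_eq_one fun k _ => sg_zero _
  have h2card : (2:ℂ) * (Gs.card : ℂ) = (4:ℂ)^n := by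
    have := hT2 z
    rw [hcardT, if_pos rfl, if_neg (fun h => hαz h.symm), add_zero] at this
    exact this
  have hcard_ne : ((Gs.card : ℂ)) ≠ 0 := by
    intro h
    rw [h, mul_zero] at h2card
    exact (pow_ne_zero n (by norm_num : (4:ℂ) ≠ 0)) h2card.symm
  have hT : ∀ β : Fin n → Fin 4, ∑ g ∈ Gs, ∏ k, sg (g k) (β k)
      = (if β = z then (Gs.card:ℂ) else 0) + (if β = α then (Gs.card:ℂ) else 0) := by
    intro β
    apply mul_left_cancel₀ (two_ne_zero (α := ℂ))
    rw [hT2 β, mul_add, mul_ite, mul_ite, mul_zero, h2card]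
  -- conjugation of summands
  have key : ∀ g ∈ Gs,
      PauliProd g * (∑ β : Fin n → Fin 4, (hco β:ℂ) • PauliProd β) * (PauliProd g)⁻¹
      = ∑ β : Fin n → Fin 4, ((hco β:ℂ) * ∏ k, sg (g k) (β k)) • PauliProd β := by
    intro g _
    rw [PauliProd_inv, Finset.mul_sum, Finset.sum_mul]
    refine Finset.sum_congr rfl fun β _ => ?_
    rw [mul_smul_comm, smul_mul_assoc, PauliProd_conj, smul_smul, mul_comm]
  rw [Finset.sum_congr rfl key, Finset.sum_comm]
  have step2 : ∀ β : Fin n → Fin 4,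
      ∑ g ∈ Gs, ((hco β:ℂ) * ∏ k, sg (g k) (β k)) • PauliProd β
      = (if β = z then ((hco β:ℂ) * (Gs.card:ℂ)) • PauliProd β else 0)
        + (if β = α then ((hco β:ℂ) * (Gs.card:ℂ)) • PauliProd β else 0) := by
    intro β
    rw [← Finset.sum_smul, ← Finset.mul_sum, hT β]
    by_cases h1 : β = z
    · have h2 : ¬ β = α := fun h => hαz (h ▸ h1)
      rw [if_pos h1, if_neg h2, if_pos h1, if_neg h2, add_zero, add_zero]
    · by_cases h2 : β = α
      · rw [if_pos h2, if_neg h1, if_neg h1, if_pos h2, zero_add, zero_add]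
      · rw [if_neg h1, if_neg h2, if_neg h1, if_neg h2, add_zero, add_zero, mul_zero,
          zero_smul]
  rw [Finset.sum_congr rfl fun β _ => step2 β, Finset.sum_add_distrib,
    Finset.sum_ite_eq' Finset.univ z
      (fun β => ((hco β:ℂ) * (Gs.card:ℂ)) • PauliProd β),
    Finset.sum_ite_eq' Finset.univ α
      (fun β => ((hco β:ℂ) * (Gs.card:ℂ)) • PauliProd β),
    if_pos (Finset.mem_univ _), if_pos (Finset.mem_univ _)]
  rw [show PauliProd z = 1 from PauliProd_zero, smul_add, smul_smul, smul_smul]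
  rw [show (Gs.card:ℂ)⁻¹ * ((hco z:ℂ) * (Gs.card:ℂ)) = (hco z:ℂ) by
      field_simp,
    show (Gs.card:ℂ)⁻¹ * ((hco α:ℂ) * (Gs.card:ℂ)) = (hco α:ℂ) by
      field_simp]
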